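/- arXiv:2405.04025 — 3 statements merged into one kernel-verified Lean document; each statement's English description precedes it below -/
import Mathlib

section
/- Constraint violation under an inaccurate group predictor: let γ_k(x) = g(x,k)/E_X[g(X,k)] and γ̂_k(x) = ĝ(x,k)/E_X[ĝ(X,k)], with E_X[γ_k(X)] = E_X[γ̂_k(X)] = 1 for all k. Suppose π̂ : 𝒳 → [0,1]^{𝒴} satisfies |E_X[(γ̂_k(X) − γ̂_{k'}(X)) π̂(X,y)]| ≤ α for all k, k' in an index set I and a fixed class y. Then |E_X[(γ_k(X) − γ_{k'}(X)) π̂(X,y)]| ≤ min(1, α + ε) for all k, k' ∈ I, where ε = max_{k∈I} E_X[|γ_k(X) − γ̂_k(X)|]. -/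
open MeasureTheory

lemma aux_half {𝒳 : Type*} [MeasurableSpace 𝒳] (μ : Measure 𝒳)
    (a p : 𝒳 → ℝ) (ha : Integrable a μ)
    (hap : Integrable (fun x => a x * p x) μ)
    (hmean : ∫ x, a x ∂μ = 0) (hp : ∀ x, p x ∈ Set.Icc (0:ℝ) 1) :
    |∫ x, a x * p x ∂μ| ≤ (∫ x, |a x| ∂μ) / 2 := by
  have hpos : Integrable (fun x => max (a x) 0) μ := ha.pos_part
  have hneg : Integrable (fun x => max (-a x) 0) μ := ha.neg.pos_part
  have habs : Integrable (fun x => |a x|) μ := ha.abs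
  have hPid : (fun x => max (a x) 0) = fun x => (a x + |a x|) / 2 := by
    funext x; rcases le_total (a x) 0 with h | h
    · rw [max_eq_right h, abs_of_nonpos h]; ring
    · rw [max_eq_left h, abs_of_nonneg h]; ring
  have hNid : (fun x => max (-a x) 0) = fun x => (|a x| - a x) / 2 := by
    funext x; rcases le_total (a x) 0 with h | h
    · rw [max_eq_left (by linarith), abs_of_nonpos h]; ring
    · rw [max_eq_right (by linarith), abs_of_nonneg h]; ring
  have hP : ∫ x, max (a x) 0 ∂μ = (∫ x, |a x| ∂μ) / 2 := by
    rw [hPid]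
    rw [integral_div, integral_add ha habs, hmean]; ring
  have hN : ∫ x, max (-a x) 0 ∂μ = (∫ x, |a x| ∂μ) / 2 := by
    rw [hNid]
    rw [integral_div, integral_sub habs ha, hmean]; ring
  rw [abs_le]
  constructor
  · rw [← hN]
    have : ∫ x, -(max (-a x) 0) ∂μ ≤ ∫ x, a x * p x ∂μ := by
      apply integral_mono hneg.neg hap
      intro x
      have h1 := (hp x).1; have h2 := (hp x).2
      show -(max (-a x) 0) ≤ a x * p x
      rcases le_total (a x) 0 with h | h
      · rw [max_eq_left (by linarith)]; nlinarith
      · rw [max_eq_right (by linarith)]; nlinarith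
    simpa [integral_neg] using this
  · rw [← hP]
    apply integral_mono hap hpos
    intro x
    have h1 := (hp x).1; have h2 := (hp x).2
    simp only
    rcases le_total (a x) 0 with h | h
    · rw [max_eq_right h]; nlinarith
    · rw [max_eq_left h]; nlinarith

lemma aux_one {𝒳 : Type*} [MeasurableSpace 𝒳] (μ : Measure 𝒳)
    (f p : 𝒳 → ℝ) (hf0 : ∀ x, 0 ≤ f x) (hf : Integrable f μ)
    (hfp : Integrable (fun x => f x * p x) μ)
    (hmean : ∫ x, f x ∂μ = 1) (hp : ∀ x, p x ∈ Set.Icc (0:ℝ) 1) :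
    ∫ x, f x * p x ∂μ ∈ Set.Icc (0:ℝ) 1 := by
  constructor
  · apply integral_nonneg; intro x
    exact mul_nonneg (hf0 x) (hp x).1
  · rw [← hmean]
    apply integral_mono hfp hf
    intro x; simp only
    nlinarith [(hp x).1, (hp x).2, hf0 x]

/-- Constraint violation under an inaccurate group predictor: if `π̂` satisfies the
plugin fairness constraints with tolerance `α` w.r.t. `γ̂`, then w.r.t. the true
normalized group functions `γ` the violation is at most `min(1, α + ε)`, where
`ε` bounds the `L¹` deviations `E|γ_k − γ̂_k|`. -/
theorem plugin_constraint_violation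
    {𝒳 𝒴 ι : Type*} [MeasurableSpace 𝒳] [Fintype 𝒴] [Fintype ι]
    (μ : Measure 𝒳) [IsProbabilityMeasure μ]
    (γ γhat : ι → 𝒳 → ℝ)
    (hγ0 : ∀ k x, 0 ≤ γ k x) (hγhat0 : ∀ k x, 0 ≤ γhat k x)
    (hγint : ∀ k, Integrable (γ k) μ) (hγhatint : ∀ k, Integrable (γhat k) μ)
    (hγmean : ∀ k, ∫ x, γ k x ∂μ = 1) (hγhatmean : ∀ k, ∫ x, γhat k x ∂μ = 1)
    (I : Finset ι) (y : 𝒴)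
    (πhat : 𝒳 → 𝒴 → ℝ) (hπhat01 : ∀ x y', πhat x y' ∈ Set.Icc (0:ℝ) 1)
    (hπint : ∀ k y', Integrable (fun x => γ k x * πhat x y') μ ∧
      Integrable (fun x => γhat k x * πhat x y') μ)
    (α : ℝ) (hα : α ∈ Set.Icc (0:ℝ) 1)
    (hfeas : ∀ k ∈ I, ∀ k' ∈ I, |∫ x, (γhat k x - γhat k' x) * πhat x y ∂μ| ≤ α)
    (ε : ℝ) (hε : ∀ k ∈ I, ∫ x, |γ k x - γhat k x| ∂μ ≤ ε) :
    ∀ k ∈ I, ∀ k' ∈ I,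
      |∫ x, (γ k x - γ k' x) * πhat x y ∂μ| ≤ min 1 (α + ε) := by
  intro k hk k' hk'
  have hπ : ∀ x, πhat x y ∈ Set.Icc (0:ℝ) 1 := fun x => hπhat01 x y
  rw [le_min_iff]
  constructor
  · -- bound by 1
    have hsplit : ∫ x, (γ k x - γ k' x) * πhat x y ∂μ =
        (∫ x, γ k x * πhat x y ∂μ) - ∫ x, γ k' x * πhat x y ∂μ := by
      rw [← integral_sub (hπint k y).1 (hπint k' y).1]
      congr 1; funext x; ring
    have h1 := aux_one μ (γ k) (fun x => πhat x y) (hγ0 k) (hγint k)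
      (hπint k y).1 (hγmean k) hπ
    have h2 := aux_one μ (γ k') (fun x => πhat x y) (hγ0 k') (hγint k')
      (hπint k' y).1 (hγmean k') hπ
    rw [hsplit, abs_le]
    exact ⟨by linarith [h1.1, h2.2], by linarith [h1.2, h2.1]⟩
  · -- bound by α + ε
    have hA : Integrable (fun x => (γhat k x - γhat k' x) * πhat x y) μ := by
      simpa [sub_mul, Pi.sub_def] using ((hπint k y).2.sub (hπint k' y).2)
    have hB : Integrable (fun x => (γ k x - γhat k x) * πhat x y) μ := by
      simpa [sub_mul, Pi.sub_def] using ((hπint k y).1.sub (hπint k y).2)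
    have hC : Integrable (fun x => (γ k' x - γhat k' x) * πhat x y) μ := by
      simpa [sub_mul, Pi.sub_def] using ((hπint k' y).1.sub (hπint k' y).2)
    have hdecomp : ∫ x, (γ k x - γ k' x) * πhat x y ∂μ =
        (∫ x, (γhat k x - γhat k' x) * πhat x y ∂μ)
        + (∫ x, (γ k x - γhat k x) * πhat x y ∂μ)
        - (∫ x, (γ k' x - γhat k' x) * πhat x y ∂μ) := by
      have e : ∫ x, (γ k x - γ k' x) * πhat x y ∂μ
          = ∫ x, ((γhat k x - γhat k' x) * πhat x y
              + (γ k x - γhat k x) * πhat x y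
              - (γ k' x - γhat k' x) * πhat x y) ∂μ := by
        congr 1; funext x; ring
      have hAB : Integrable (fun x => (γhat k x - γhat k' x) * πhat x y
          + (γ k x - γhat k x) * πhat x y) μ := hA.add hB
      rw [e, integral_sub hAB hC, integral_add hA hB]
    have hBhalf := aux_half μ (fun x => γ k x - γhat k x) (fun x => πhat x y)
      ((hγint k).sub (hγhatint k)) hB
      (by rw [integral_sub (hγint k) (hγhatint k), hγmean, hγhatmean]; ring) hπ
    have hCHalf := aux_half μ (fun x => γ k' x - γhat k' x) (fun x => πhat x y)
      ((hγint k').sub (hγhatint k')) hC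
      (by rw [integral_sub (hγint k') (hγhatint k'), hγmean, hγhatmean]; ring) hπ
    have hεk := hε k hk
    have hεk' := hε k' hk'
    have hfa := hfeas k hk k' hk'
    calc |∫ x, (γ k x - γ k' x) * πhat x y ∂μ|
        ≤ |∫ x, (γhat k x - γhat k' x) * πhat x y ∂μ|
          + |∫ x, (γ k x - γhat k x) * πhat x y ∂μ|
          + |∫ x, (γ k' x - γhat k' x) * πhat x y ∂μ| := by
          rw [hdecomp]
          exact (abs_sub _ _).trans (by gcongr; exact abs_add_le _ _)
      _ ≤ α + ε := by linarith
end

section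
/- Excess risk from plugin group predictor: under the setting of the previous two statements, if π minimizes E_X[⟨r(X,·), π(X,·)⟩] subject to the true fairness constraints with tolerance α and π̂ minimizes the same risk subject to the plugin constraints (w.r.t. γ̂) with tolerance α, then E_X[⟨r(X,·), π̂(X,·)⟩] ≤ E_X[⟨r(X,·), π(X,·)⟩] + 2‖r‖_∞ · min(1 − α, ε/(α+ε)), where ε is the maximal L¹ deviation between the normalized group functions γ_k and γ̂_k. -/
open MeasureTheory

/-- A randomized classifier `π'` is feasible for the fairness-constrained problem:
it is measurable, simplex-valued, and satisfies every fairness constraint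
`|E_X[(γ'_k − γ'_{k'}) π'(X, y_c)]| ≤ α` for `k, k'` in the constraint's index set. -/
def FairFeasible {𝒳 𝒴 ι C : Type*} [MeasurableSpace 𝒳] [Fintype 𝒴]
    (μ : Measure 𝒳) (γ' : ι → 𝒳 → ℝ) (yc : C → 𝒴) (Ic : C → Finset ι) (α : ℝ)
    (π' : 𝒳 → 𝒴 → ℝ) : Prop :=
  (∀ y', Measurable (fun x => π' x y')) ∧
  (∀ x, (∀ y', 0 ≤ π' x y') ∧ ∑ y', π' x y' = 1) ∧
  (∀ c : C, ∀ k ∈ Ic c, ∀ k' ∈ Ic c,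
    |∫ x, (γ' k x - γ' k' x) * π' x (yc c) ∂μ| ≤ α)

/-- Integrable times bounded measurable is integrable. -/
lemma integrable_mul_bdd {𝒳 : Type*} [MeasurableSpace 𝒳] {μ : Measure 𝒳}
    {g p : 𝒳 → ℝ} (hg : Integrable g μ) (hp : Measurable p)
    (hpb : ∀ x, |p x| ≤ 1) : Integrable (fun x => g x * p x) μ := by
  have := hg.bdd_mul (f := p) (c := 1) hp.aestronglyMeasurable (Filter.Eventually.of_forall fun x => by
    simpa [Real.norm_eq_abs] using hpb x)
  simpa [mul_comm] using this

/-- If `f` has mean zero, `∫|f| ≤ ε` and `0 ≤ p ≤ 1`, then `|∫ f p| ≤ ε/2`. -/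
lemma abs_integral_mul_le_half {𝒳 : Type*} [MeasurableSpace 𝒳] {μ : Measure 𝒳}
    {f p : 𝒳 → ℝ} {ε : ℝ} (hf : Integrable f μ) (hfp : Integrable (fun x => f x * p x) μ)
    (hmean : ∫ x, f x ∂μ = 0) (habs : ∫ x, |f x| ∂μ ≤ ε)
    (hp0 : ∀ x, 0 ≤ p x) (hp1 : ∀ x, p x ≤ 1) :
    |∫ x, f x * p x ∂μ| ≤ ε / 2 := by
  have hfa : Integrable (fun x => |f x|) μ := hf.abs
  have hup : ∫ x, f x * p x ∂μ ≤ ∫ x, (|f x| + f x) / 2 ∂μ := by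
    refine integral_mono hfp ((hfa.add hf).div_const 2) (fun x => ?_)
    rcases le_total 0 (f x) with h | h
    · rw [abs_of_nonneg h]
      nlinarith [hp0 x, hp1 x, mul_le_mul_of_nonneg_left (hp1 x) h]
    · rw [abs_of_nonpos h]
      nlinarith [hp0 x, mul_nonneg (neg_nonneg.2 h) (hp0 x)]
  have hlo : ∫ x, (f x - |f x|) / 2 ∂μ ≤ ∫ x, f x * p x ∂μ := by
    refine integral_mono ((hf.sub hfa).div_const 2) hfp (fun x => ?_)
    rcases le_total 0 (f x) with h | h
    · rw [abs_of_nonneg h]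
      nlinarith [mul_nonneg h (hp0 x)]
    · rw [abs_of_nonpos h]
      nlinarith [hp1 x, mul_le_mul_of_nonneg_left (hp1 x) (neg_nonneg.2 h)]
  have h1 : ∫ x, (|f x| + f x) / 2 ∂μ = (∫ x, |f x| ∂μ) / 2 := by
    rw [integral_div, integral_add hfa hf, hmean, add_zero]
  have h2 : ∫ x, (f x - |f x|) / 2 ∂μ = -((∫ x, |f x| ∂μ) / 2) := by
    rw [integral_div, integral_sub hf hfa, hmean, zero_sub, neg_div]
  have hia : 0 ≤ ∫ x, |f x| ∂μ := integral_nonneg fun x => abs_nonneg _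
  rw [h1] at hup; rw [h2] at hlo
  rw [abs_le]; constructor <;> linarith

/-- Excess risk from a plugin group predictor: if `π` minimizes the risk subject to
the true fairness constraints (w.r.t. `γ`) and `π̂` minimizes the same risk subject
to the plugin constraints (w.r.t. `γ̂`), both with tolerance `α`, then the risk of
`π̂` exceeds that of `π` by at most `2‖r‖_∞ · min(1−α, ε/(α+ε))`. -/
theorem plugin_group_excess_risk
    {𝒳 𝒴 ι C : Type*} [MeasurableSpace 𝒳] [Fintype 𝒴] [Fintype ι] [Fintype C]
    [Nonempty 𝒴]
    (μ : Measure 𝒳) [IsProbabilityMeasure μ]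
    (r : 𝒳 → 𝒴 → ℝ) (Rb : ℝ)
    (hr : ∀ y, Measurable (fun x => r x y))
    (hr0 : ∀ x y, 0 ≤ r x y) (hrb : ∀ x y, r x y ≤ Rb)
    (γ γhat : ι → 𝒳 → ℝ)
    (hγmeas : ∀ k, Measurable (γ k)) (hγhatmeas : ∀ k, Measurable (γhat k))
    (hγ0 : ∀ k x, 0 ≤ γ k x) (hγhat0 : ∀ k x, 0 ≤ γhat k x)
    (hγint : ∀ k, Integrable (γ k) μ) (hγhatint : ∀ k, Integrable (γhat k) μ)
    (hγmean : ∀ k, ∫ x, γ k x ∂μ = 1) (hγhatmean : ∀ k, ∫ x, γhat k x ∂μ = 1)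
    (yc : C → 𝒴) (Ic : C → Finset ι)
    (α : ℝ) (hα : α ∈ Set.Icc (0:ℝ) 1)
    (ε : ℝ) (hε0 : 0 ≤ ε)
    (hε : ∀ k : ι, ∫ x, |γ k x - γhat k x| ∂μ ≤ ε)
    (π πhat : 𝒳 → 𝒴 → ℝ)
    (hπF : FairFeasible μ γ yc Ic α π)
    (hπhatF : FairFeasible μ γhat yc Ic α πhat)
    (hπmin : ∀ π', FairFeasible μ γ yc Ic α π' →
      ∫ x, ∑ y, r x y * π x y ∂μ ≤ ∫ x, ∑ y, r x y * π' x y ∂μ)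
    (hπhatmin : ∀ π', FairFeasible μ γhat yc Ic α π' →
      ∫ x, ∑ y, r x y * πhat x y ∂μ ≤ ∫ x, ∑ y, r x y * π' x y ∂μ) :
    ∫ x, ∑ y, r x y * πhat x y ∂μ
      ≤ (∫ x, ∑ y, r x y * π x y ∂μ)
        + 2 * Rb * min (1 - α) (ε / (α + ε)) := by
  classical
  obtain ⟨hπm, hπs, hπc⟩ := hπF
  obtain ⟨hα0, hα1⟩ := hα
  -- 𝒳 is nonempty since μ is a probability measure
  have hX : Nonempty 𝒳 := by
    by_contra h
    rw [not_nonempty_iff] at h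
    have h1 : μ Set.univ = 1 := measure_univ
    rw [Set.univ_eq_empty_iff.2 h, measure_empty] at h1
    exact zero_ne_one h1
  have hRb0 : 0 ≤ Rb :=
    le_trans (hr0 hX.some (Classical.arbitrary 𝒴)) (hrb _ _)
  set β := min (1 - α) (ε / (α + ε)) with hβdef
  have hβ0 : 0 ≤ β := le_min (by linarith) (div_nonneg hε0 (by linarith))
  have hβ1 : β ≤ 1 := le_trans (min_le_left _ _) (by linarith)
  set y0 : 𝒴 := Classical.arbitrary 𝒴 with hy0
  set πt : 𝒳 → 𝒴 → ℝ :=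
    fun x y => (1 - β) * π x y + β * (if y = y0 then 1 else 0) with hπtdef
  -- π is [0,1]-valued
  have hπ0 : ∀ x y, 0 ≤ π x y := fun x y => (hπs x).1 y
  have hπ1 : ∀ x y, π x y ≤ 1 := by
    intro x y
    calc π x y ≤ ∑ y', π x y' :=
          Finset.single_le_sum (fun y' _ => (hπs x).1 y') (Finset.mem_univ y)
      _ = 1 := (hπs x).2
  -- πt is feasible for the plugin constraints
  have hπtF : FairFeasible μ γhat yc Ic α πt := by
    refine ⟨fun y => ((hπm y).const_mul _).add measurable_const, fun x => ⟨fun y => ?_, ?_⟩, ?_⟩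
    · have := hπ0 x y
      have : 0 ≤ (1 - β) * π x y := mul_nonneg (by linarith) this
      have h2 : (0:ℝ) ≤ β * (if y = y0 then 1 else 0) := by positivity
      simp only [hπtdef]; linarith
    · simp only [hπtdef, Finset.sum_add_distrib, ← Finset.mul_sum, (hπs x).2,
        Finset.sum_ite_eq' Finset.univ y0 (fun _ => (1:ℝ)), Finset.mem_univ, if_true]
      ring
    · intro c k hk k' hk'
      set g : 𝒳 → ℝ := fun x => γhat k x - γhat k' x with hgdef
      have hgint : Integrable g μ := (hγhatint k).sub (hγhatint k')
      have hgπint : Integrable (fun x => g x * π x (yc c)) μ :=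
        integrable_mul_bdd hgint (hπm (yc c))
          (fun x => abs_le.2 ⟨by linarith [hπ0 x (yc c)], hπ1 x (yc c)⟩)
      have hgmean : ∫ x, g x ∂μ = 0 := by
        rw [hgdef]
        simp only
        rw [integral_sub (hγhatint k) (hγhatint k'), hγhatmean, hγhatmean, sub_self]
      -- the constraint integral for πt
      have hsplit : ∫ x, g x * πt x (yc c) ∂μ = (1 - β) * ∫ x, g x * π x (yc c) ∂μ := by
        have : (fun x => g x * πt x (yc c))
            = fun x => (1 - β) * (g x * π x (yc c))
                + (β * (if yc c = y0 then 1 else 0)) * g x := by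
          funext x; simp only [hπtdef]; ring
        rw [this, integral_add (hgπint.const_mul _) (hgint.const_mul _),
          integral_const_mul, integral_const_mul, hgmean, mul_zero, add_zero]
      -- bound V := |∫ g π|
      set V := ∫ x, g x * π x (yc c) ∂μ with hVdef
      have hV1 : |V| ≤ 1 := by
        have hup : V ≤ 1 := by
          rw [hVdef]
          calc ∫ x, g x * π x (yc c) ∂μ ≤ ∫ x, γhat k x ∂μ := by
                refine integral_mono hgπint (hγhatint k) (fun x => ?_)
                have h1 : γhat k' x * π x (yc c) ≥ 0 :=
                  mul_nonneg (hγhat0 k' x) (hπ0 x (yc c))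
                have h2 : γhat k x * π x (yc c) ≤ γhat k x :=
                  mul_le_of_le_one_right (hγhat0 k x) (hπ1 x (yc c))
                simp only [hgdef]; nlinarith
            _ = 1 := hγhatmean k
        have hlo : -1 ≤ V := by
          rw [hVdef]
          have : -(1:ℝ) = ∫ x, -(γhat k' x) ∂μ := by
            rw [integral_neg, hγhatmean]
          rw [this]
          refine integral_mono (hγhatint k').neg hgπint (fun x => ?_)
          have h1 : γhat k x * π x (yc c) ≥ 0 :=
            mul_nonneg (hγhat0 k x) (hπ0 x (yc c))
          have h2 : γhat k' x * π x (yc c) ≤ γhat k' x :=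
            mul_le_of_le_one_right (hγhat0 k' x) (hπ1 x (yc c))
          simp only [hgdef]; nlinarith
        exact abs_le.2 ⟨hlo, hup⟩
      have hVαε : |V| ≤ α + ε := by
        have hconstr := hπc c k hk k' hk'
        set f1 : 𝒳 → ℝ := fun x => γhat k x - γ k x with hf1
        set f2 : 𝒳 → ℝ := fun x => γhat k' x - γ k' x with hf2
        have hf1int : Integrable f1 μ := (hγhatint k).sub (hγint k)
        have hf2int : Integrable f2 μ := (hγhatint k').sub (hγint k')
        have hπbd : ∀ x, |π x (yc c)| ≤ 1 :=
          fun x => abs_le.2 ⟨by linarith [hπ0 x (yc c)], hπ1 x (yc c)⟩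
        have hf1pint : Integrable (fun x => f1 x * π x (yc c)) μ :=
          integrable_mul_bdd hf1int (hπm (yc c)) hπbd
        have hf2pint : Integrable (fun x => f2 x * π x (yc c)) μ :=
          integrable_mul_bdd hf2int (hπm (yc c)) hπbd
        have hγπint : Integrable (fun x => (γ k x - γ k' x) * π x (yc c)) μ :=
          integrable_mul_bdd ((hγint k).sub (hγint k')) (hπm (yc c)) hπbd
        have hf1mean : ∫ x, f1 x ∂μ = 0 := by
          rw [hf1]; simp only
          rw [integral_sub (hγhatint k) (hγint k), hγhatmean, hγmean, sub_self]
        have hf2mean : ∫ x, f2 x ∂μ = 0 := by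
          rw [hf2]; simp only
          rw [integral_sub (hγhatint k') (hγint k'), hγhatmean, hγmean, sub_self]
        have hf1abs : ∫ x, |f1 x| ∂μ ≤ ε := by
          have : ∀ x, |f1 x| = |γ k x - γhat k x| := fun x => by
            rw [hf1]; simp only; rw [abs_sub_comm]
          rw [funext this]  -- may need adjustment
          exact hε k
        have hf2abs : ∫ x, |f2 x| ∂μ ≤ ε := by
          have : ∀ x, |f2 x| = |γ k' x - γhat k' x| := fun x => by
            rw [hf2]; simp only; rw [abs_sub_comm]
          rw [funext this]
          exact hε k'
        have hb1 : |∫ x, f1 x * π x (yc c) ∂μ| ≤ ε / 2 :=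
          abs_integral_mul_le_half hf1int hf1pint hf1mean hf1abs
            (fun x => hπ0 x (yc c)) (fun x => hπ1 x (yc c))
        have hb2 : |∫ x, f2 x * π x (yc c) ∂μ| ≤ ε / 2 :=
          abs_integral_mul_le_half hf2int hf2pint hf2mean hf2abs
            (fun x => hπ0 x (yc c)) (fun x => hπ1 x (yc c))
        have hdecomp : V = (∫ x, (γ k x - γ k' x) * π x (yc c) ∂μ)
            + (∫ x, f1 x * π x (yc c) ∂μ) - (∫ x, f2 x * π x (yc c) ∂μ) := by
          have hFint : Integrable
              (fun x => (γ k x - γ k' x) * π x (yc c) + f1 x * π x (yc c)) μ :=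
            hγπint.add hf1pint
          have e1 : (fun x => g x * π x (yc c))
              = fun x => ((γ k x - γ k' x) * π x (yc c) + f1 x * π x (yc c))
                  - f2 x * π x (yc c) := by
            funext x; simp only [hgdef, hf1, hf2]; ring
          rw [hVdef, e1, integral_sub hFint hf2pint, integral_add hγπint hf1pint]
        rw [hdecomp]
        calc |(∫ x, (γ k x - γ k' x) * π x (yc c) ∂μ)
            + (∫ x, f1 x * π x (yc c) ∂μ) - (∫ x, f2 x * π x (yc c) ∂μ)|
            ≤ |∫ x, (γ k x - γ k' x) * π x (yc c) ∂μ|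
              + |∫ x, f1 x * π x (yc c) ∂μ| + |∫ x, f2 x * π x (yc c) ∂μ| := by
              exact (abs_sub _ _).trans (by gcongr; exact abs_add_le _ _)
          _ ≤ α + ε / 2 + ε / 2 := by gcongr
          _ = α + ε := by ring
      -- arithmetic: (1-β)|V| ≤ α
      rw [hsplit, abs_mul, abs_of_nonneg (by linarith : (0:ℝ) ≤ 1 - β)]
      rcases min_cases (1 - α) (ε / (α + ε)) with ⟨hmin, _⟩ | ⟨hmin, _⟩
      · rw [hβdef, hmin]
        have : (1 - (1 - α)) * |V| ≤ 1 * 1 := by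
          apply mul_le_mul (by linarith) (hV1) (abs_nonneg _) (by norm_num)
        calc (1 - (1 - α)) * |V| = α * |V| := by ring
          _ ≤ α * 1 := by
            exact mul_le_mul_of_nonneg_left hV1 hα0
          _ = α := mul_one α
      · rw [hβdef, hmin]
        rcases eq_or_lt_of_le (by linarith : (0:ℝ) ≤ α + ε) with h0 | h0
        · have hα' : α = 0 := by linarith
          have hε' : ε = 0 := by linarith
          have hV0 : |V| = 0 := by
            refine le_antisymm ?_ (abs_nonneg _)
            rw [hα', hε'] at hVαε; linarith
          rw [hα', hε', hV0]
          norm_num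
        · have h1 : 1 - ε / (α + ε) = α / (α + ε) := by
            field_simp
            ring
          rw [h1, div_mul_eq_mul_div, div_le_iff₀ h0]
          nlinarith [abs_nonneg V]
  -- risk comparison
  have hrπint : Integrable (fun x => ∑ y, r x y * π x y) μ := by
    refine Integrable.mono' (integrable_const ((Fintype.card 𝒴 : ℝ) * Rb))
      (Finset.aestronglyMeasurable_fun_sum _ fun y _ => ((hr y).mul (hπm y)).aestronglyMeasurable)
      (Filter.Eventually.of_forall fun x => ?_)
    rw [Real.norm_eq_abs]
    calc |∑ y, r x y * π x y| ≤ ∑ y, |r x y * π x y| := Finset.abs_sum_le_sum_abs _ _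
      _ ≤ ∑ _y : 𝒴, Rb := by
          refine Finset.sum_le_sum fun y _ => ?_
          rw [abs_mul, abs_of_nonneg (hr0 x y), abs_of_nonneg (hπ0 x y)]
          calc r x y * π x y ≤ Rb * 1 :=
                mul_le_mul (hrb x y) (hπ1 x y) (hπ0 x y) hRb0
            _ = Rb := mul_one Rb
      _ = (Fintype.card 𝒴 : ℝ) * Rb := by
          rw [Finset.sum_const, Finset.card_univ, nsmul_eq_mul]
  have hry0int : Integrable (fun x => r x y0) μ := by
    refine Integrable.mono' (integrable_const Rb) (hr y0).aestronglyMeasurable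
      (Filter.Eventually.of_forall fun x => ?_)
    rw [Real.norm_eq_abs, abs_of_nonneg (hr0 x y0)]; exact hrb x y0
  have hsplit : ∫ x, ∑ y, r x y * πt x y ∂μ
      = (1 - β) * (∫ x, ∑ y, r x y * π x y ∂μ) + β * ∫ x, r x y0 ∂μ := by
    have heq : (fun x => ∑ y, r x y * πt x y)
        = fun x => (1 - β) * (∑ y, r x y * π x y) + β * r x y0 := by
      funext x
      have hterm : ∀ y, r x y * πt x y
          = (1 - β) * (r x y * π x y) + (if y = y0 then β * r x y else 0) := by
        intro y; simp only [hπtdef]; split <;> ring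
      rw [Finset.sum_congr rfl fun y _ => hterm y, Finset.sum_add_distrib,
        ← Finset.mul_sum, Finset.sum_ite_eq' Finset.univ y0 (fun y => β * r x y)]
      simp
    rw [heq, integral_add (hrπint.const_mul _) (hry0int.const_mul _),
      integral_const_mul, integral_const_mul]
  have hR0 : 0 ≤ ∫ x, ∑ y, r x y * π x y ∂μ :=
    integral_nonneg fun x => Finset.sum_nonneg fun y _ => mul_nonneg (hr0 x y) (hπ0 x y)
  have hRy0 : ∫ x, r x y0 ∂μ ≤ Rb := by
    calc ∫ x, r x y0 ∂μ ≤ ∫ _x, Rb ∂μ :=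
          integral_mono hry0int (integrable_const Rb) fun x => hrb x y0
      _ = Rb := by simp
  calc ∫ x, ∑ y, r x y * πhat x y ∂μ ≤ ∫ x, ∑ y, r x y * πt x y ∂μ := hπhatmin πt hπtF
    _ = (1 - β) * (∫ x, ∑ y, r x y * π x y ∂μ) + β * ∫ x, r x y0 ∂μ := hsplit
    _ ≤ (∫ x, ∑ y, r x y * π x y ∂μ) + 2 * Rb * β := by nlinarith
end

section
/- Disagreement bound between the deterministic argmin classifier and a randomized solution: let u : 𝒳 → ℝ^m be a feature map, β_1,...,β_L ∈ ℝ^m class coefficient vectors, and suppose points x_1,...,x_N satisfy: for each pair y ≠ y', at most one index i has (β_y − β_{y'})ᵀ u(x_i) = 0. Let ĥ(x) = min(argmin_y β_yᵀ u(x)), and let π : 𝒳 → Δ([L]) satisfy π(x_i, y) > 0 ⟹ y ∈ argmin_{y'} β_{y'}ᵀ u(x_i) for all i. Then for every class y, ∑_{i=1}^N |𝟙[ĥ(x_i) = y] − π(x_i, y)| ≤ L − 1. -/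
open Matrix

/-- Disagreement bound between the deterministic argmin classifier `ĥ` and a
randomized solution `π` supported on the argmin: if for each pair of classes at
most one sample lies on their decision boundary, then for every class `y` the
total disagreement `∑ᵢ |𝟙[ĥ(xᵢ)=y] − π(xᵢ,y)|` is at most `L − 1`. -/
theorem argmin_disagreement_bound
    {𝒳 : Type*} (m L N : ℕ)
    (u : 𝒳 → Fin m → ℝ) (β : Fin L → Fin m → ℝ)
    (x : Fin N → 𝒳)
    (hboundary : ∀ y y' : Fin L, y ≠ y' →
      {i : Fin N | (β y - β y') ⬝ᵥ u (x i) = 0}.Subsingleton)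
    (hhat : 𝒳 → Fin L)
    (hhat_def : ∀ z : 𝒳,
      (∀ y : Fin L, β (hhat z) ⬝ᵥ u z ≤ β y ⬝ᵥ u z) ∧
      (∀ y : Fin L, y < hhat z → β (hhat z) ⬝ᵥ u z < β y ⬝ᵥ u z))
    (π : 𝒳 → Fin L → ℝ)
    (hπsimplex : ∀ z, (∀ y, 0 ≤ π z y) ∧ ∑ y, π z y = 1)
    (hπsupp : ∀ i : Fin N, ∀ y : Fin L, 0 < π (x i) y →
      ∀ y' : Fin L, β y ⬝ᵥ u (x i) ≤ β y' ⬝ᵥ u (x i)) :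
    ∀ y : Fin L,
      ∑ i, |(if hhat (x i) = y then (1:ℝ) else 0) - π (x i) y| ≤ (L : ℝ) - 1 := by
  intro y
  set f : Fin N → ℝ := fun i => |(if hhat (x i) = y then (1:ℝ) else 0) - π (x i) y| with hf
  have hπle1 : ∀ z, ∀ c : Fin L, π z c ≤ 1 := by
    intro z c
    have h1 := (hπsimplex z).2
    have h2 : π z c ≤ ∑ y', π z y' :=
      Finset.single_le_sum (fun j _ => (hπsimplex z).1 j) (Finset.mem_univ c)
    linarith
  have hfle1 : ∀ i, f i ≤ 1 := by
    intro i
    have h0 := (hπsimplex (x i)).1 y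
    have h1 := hπle1 (x i) y
    rw [hf]
    simp only
    rw [abs_sub_le_iff]
    constructor <;> split_ifs <;> linarith
  -- key: nonzero term implies a tie between y and some other class at x i
  have hkey : ∀ i : Fin N, f i ≠ 0 →
      ∃ y' : Fin L, y' ≠ y ∧ (β y - β y') ⬝ᵥ u (x i) = 0 := by
    intro i hi
    by_contra hcon
    push_neg at hcon
    have htie : ∀ y' : Fin L, y' ≠ y → β y ⬝ᵥ u (x i) ≠ β y' ⬝ᵥ u (x i) := by
      intro y' hy' heq
      exact hcon y' hy' (by rw [sub_dotProduct, heq, sub_self])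
    apply hi
    rw [hf]
    simp only
    by_cases hh : hhat (x i) = y
    · -- π (x i) y = 1
      have hpy : π (x i) y = 1 := by
        have hz : ∀ y' : Fin L, y' ≠ y → π (x i) y' = 0 := by
          intro y' hy'
          by_contra hne
          have hpos : 0 < π (x i) y' := lt_of_le_of_ne ((hπsimplex (x i)).1 y') (Ne.symm hne)
          have h1 := hπsupp i y' hpos y
          have h2 := (hhat_def (x i)).1 y'
          rw [hh] at h2
          exact htie y' hy' (le_antisymm h2 h1)
        have := (hπsimplex (x i)).2
        rwa [Finset.sum_eq_single y (fun b _ hb => hz b hb) (fun h => absurd (Finset.mem_univ y) h)] at this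
      rw [if_pos hh, hpy]; simp
    · -- π (x i) y = 0
      have hpy : π (x i) y = 0 := by
        by_contra hne
        have hpos : 0 < π (x i) y := lt_of_le_of_ne ((hπsimplex (x i)).1 y) (Ne.symm hne)
        have h1 := hπsupp i y hpos (hhat (x i))
        have h2 := (hhat_def (x i)).1 y
        exact htie (hhat (x i)) hh (le_antisymm h1 h2)
      rw [if_neg hh, hpy]; simp
  -- the set of nonzero terms
  set S : Finset (Fin N) := Finset.univ.filter (fun i => f i ≠ 0) with hS
  have hsum : ∑ i, f i = ∑ i ∈ S, f i := by
    rw [hS]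
    exact (Finset.sum_filter_ne_zero Finset.univ).symm
  have hcard : S.card ≤ L - 1 := by
    classical
    have : S.card ≤ (Finset.univ.erase y).card := by
      apply Finset.card_le_card_of_injOn
        (fun i => if h : ∃ y' : Fin L, y' ≠ y ∧ (β y - β y') ⬝ᵥ u (x i) = 0
                  then h.choose else y)
      · intro i hi
        rw [hS, Finset.mem_coe, Finset.mem_filter] at hi
        have hex := hkey i hi.2
        simp only [Finset.mem_coe]
        rw [dif_pos hex]
        exact Finset.mem_erase.mpr ⟨hex.choose_spec.1, Finset.mem_univ _⟩
      · intro i hi j hj hij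
        rw [Finset.mem_coe, hS, Finset.mem_filter] at hi hj
        have hexi := hkey i hi.2
        have hexj := hkey j hj.2
        simp only at hij
        rw [dif_pos hexi, dif_pos hexj] at hij
        have h1 := hexi.choose_spec
        have h2 := hexj.choose_spec
        rw [hij] at h1
        exact hboundary y hexj.choose (Ne.symm h2.1) h1.2 h2.2
    calc S.card ≤ (Finset.univ.erase y).card := this
    _ = L - 1 := by rw [Finset.card_erase_of_mem (Finset.mem_univ y), Finset.card_univ, Fintype.card_fin]
  have hLpos : 1 ≤ L := Fin.pos y
  have hbound : ∑ i ∈ S, f i ≤ (S.card : ℝ) := by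
    calc ∑ i ∈ S, f i ≤ S.card • (1:ℝ) :=
      Finset.sum_le_card_nsmul S f 1 (fun i _ => hfle1 i)
    _ = (S.card : ℝ) := by simp
  have : (S.card : ℝ) ≤ (L : ℝ) - 1 := by
    have : ((S.card : ℕ) : ℝ) ≤ ((L - 1 : ℕ) : ℝ) := Nat.cast_le.mpr hcard
    rwa [Nat.cast_sub hLpos, Nat.cast_one] at this
  linarith [hsum ▸ hbound]
end
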